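/- arXiv:2511.21147 — 2 statements merged into one kernel-verified Lean document; each statement's English description precedes it below -/
import Mathlib

section
/- In the instance of Example 7 (three asylum seekers with s(a₁) > s(a₂) ≥ s(a₃), wait times {w_l, w_h}, quotas q_{m₁} = s(a₁), q_{m₂} = q_{m₃} = 1, capacities r^{w_l}_m = 2 for all m, and the stated preferences and priorities), the allocation Y₁ = {x₂, x₆, x₈} ∪ {(a_n, m₄, w_h) : n > 3} is the unique stable allocation under the true preference profile P, while under the misreport P̂_{a₂}: x₅ − x₆ − x₄ both Y₁ and Y₂ = {x₁, x₅, x₇} ∪ {(a_n, m₄, w_h) : n > 3} are stable. -/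
/-- A contract: `(asylum seeker, member state, wait time)`.  Asylum seekers,
member states and wait times are labelled by naturals. -/
abbrev Ctr3 := ℕ × ℕ × ℕ

open Classical in
/-- Pick, from a nonempty set of contracts at member state `m`, the
lowest-wait-time contract of the highest-priority asylum seeker. -/
noncomputable def pick3 (π : ℕ → ℕ) (m : ℕ) (Z : Finset Ctr3)
    (h : Z.Nonempty) : Ctr3 :=
  let k := (Z.image fun x => toLex ((π x.1 : ℕ), toLex (x.2.2, x.1))).min'
    (h.image _)
  ((ofLex (ofLex k).2).2, m, (ofLex (ofLex k).2).1)

open Classical in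
/-- The greedy run of member state `m`'s choice rule `Ĉ_m`, with fuel:
process asylum seekers by priority `π`, accept for each the lowest-wait-time
contract with remaining capacity, stop at quota `q`. -/
noncomputable def run3 (s : ℕ → ℕ) (q : ℕ) (r π : ℕ → ℕ) (m : ℕ)
    (X' : Finset Ctr3) : ℕ → Finset Ctr3 → Finset Ctr3
  | 0, acc => acc
  | n+1, acc =>
    let Z : Finset Ctr3 := X'.filter fun x => x.2.1 = m ∧
      (acc.filter fun y => y.2.2 = x.2.2).card < r x.2.2 ∧
      ∀ y ∈ acc, y.1 ≠ x.1
    if q ≤ acc.sum (fun x => s x.1) then acc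
    else if h : Z.Nonempty then
      run3 s q r π m X' n (insert (pick3 π m Z h) acc)
    else acc

/-- Member state `m`'s choice rule `Ĉ_m` on sets of contracts. -/
noncomputable def Chat3 (s : ℕ → ℕ) (q : ℕ) (r π : ℕ → ℕ) (m : ℕ)
    (X' : Finset Ctr3) : Finset Ctr3 :=
  run3 s q r π m X' (X'.card + 1) ∅

/-- Priorities of Example 7: `m₂` ranks `a₃ − a₂ − a₁`; the other member
states rank `a₁ − a₂ − a₃` (states `m₁ m₂ m₃ m₄ = 0 1 2 3`, asylum seekers
`a₁ a₂ a₃ = 0 1 2`). -/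
def π16 : ℕ → ℕ → ℕ := fun m a => if m = 1 then 2 - a else a

/-- Quotas of Example 7: `q_{m₁} = s(a₁)`, `q_{m₂} = q_{m₃} = 1`,
`q_{m₄} = Σ_a s(a)`. -/
def q16 (s : ℕ → ℕ) : ℕ → ℕ :=
  fun m => if m = 0 then s 0 else if m = 3 then s 0 + s 1 + s 2 else 1

/-- Capacities of Example 7 (wait times `w_l w_h = 0 1`):
`r^{w_l}_m = 2` and `r^{w_h}_m = Σ_a s(a)` for every member state. -/
def r16 (s : ℕ → ℕ) : ℕ → ℕ → ℕ :=
  fun _ w => if w = 0 then 2 else s 0 + s 1 + s 2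

/-- An allocation: at most one contract per asylum seeker, capacities
respected, contracts drawn from the universe of the instance. -/
def Alloc16 (s : ℕ → ℕ) (Y : Finset Ctr3) : Prop :=
  (∀ x ∈ Y, x.1 < 3 ∧ x.2.1 < 4 ∧ x.2.2 < 2) ∧
  (∀ a : ℕ, (Y.filter fun x => x.1 = a).card ≤ 1) ∧
  (∀ m w : ℕ, (Y.filter fun x => x.2.1 = m ∧ x.2.2 = w).card ≤ r16 s m w)

/-- Stability with respect to the preference profile `p` (where `p a` ranks
`a`'s contracts, lower value = better). -/
def Stable16 (s : ℕ → ℕ) (p : ℕ → Ctr3 → ℕ) (Y : Finset Ctr3) : Prop :=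
  (∀ m : ℕ, Chat3 s (q16 s m) (r16 s m) (π16 m) m Y =
    Y.filter fun x => x.2.1 = m) ∧
  ∀ x : Ctr3, x.1 < 3 → x.2.1 < 4 → x.2.2 < 2 → x ∉ Y →
    (∀ y ∈ Y, y.1 = x.1 → p x.1 x < p x.1 y) →
    x ∉ Chat3 s (q16 s x.2.1) (r16 s x.2.1) (π16 x.2.1) x.2.1 (insert x Y)

def key (π : ℕ → ℕ) (x : Ctr3) : Lex (ℕ × Lex (ℕ × ℕ)) :=
  toLex ((π x.1 : ℕ), toLex (x.2.2, x.1))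

lemma key_le_iff (π : ℕ → ℕ) (x z : Ctr3) : key π x ≤ key π z ↔
    (π x.1 < π z.1 ∨ (π x.1 = π z.1 ∧ (x.2.2 < z.2.2 ∨ (x.2.2 = z.2.2 ∧ x.1 ≤ z.1)))) := by
  rw [key, key, Prod.Lex.le_iff, Prod.Lex.le_iff]
  exact Iff.rfl

lemma pick3_eq {π : ℕ → ℕ} {m : ℕ} {Z : Finset Ctr3} {h : Z.Nonempty} {x : Ctr3}
    (hx : x ∈ Z) (hm : x.2.1 = m) (hmin : ∀ z ∈ Z, key π x ≤ key π z) :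
    pick3 π m Z h = x := by
  have h1 : (Z.image fun z => toLex ((π z.1 : ℕ), toLex (z.2.2, z.1))).min' (h.image _)
      = key π x := by
    apply le_antisymm
    · exact Finset.min'_le _ _ (Finset.mem_image_of_mem _ hx)
    · apply Finset.le_min'
      intro y hy
      obtain ⟨z, hz, rfl⟩ := Finset.mem_image.mp hy
      exact hmin z hz
  show ((ofLex (ofLex ((Z.image fun z => toLex ((π z.1 : ℕ), toLex (z.2.2, z.1))).min'
    (h.image _))).2).2, m, _) = x
  rw [h1]
  show (x.1, m, x.2.2) = x
  rw [← hm]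

lemma run3_mono (s : ℕ → ℕ) (q : ℕ) (r π : ℕ → ℕ) (m : ℕ) (X' : Finset Ctr3) :
    ∀ (n : ℕ) (acc : Finset Ctr3), acc ⊆ run3 s q r π m X' n acc := by
  intro n
  induction n with
  | zero => intro acc; rw [run3]
  | succ n ih =>
    intro acc
    rw [run3]
    split_ifs with h1 h2
    · exact Finset.Subset.refl _
    · exact Finset.Subset.trans (Finset.subset_insert _ _) (ih _)
    · exact Finset.Subset.refl _

lemma run3_stop (s : ℕ → ℕ) {q : ℕ} (r π : ℕ → ℕ) (m : ℕ) (X' : Finset Ctr3)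
    (n : ℕ) {acc : Finset Ctr3} (hq : q ≤ acc.sum (fun x => s x.1)) :
    run3 s q r π m X' (n+1) acc = acc := by
  rw [run3, if_pos hq]

lemma run3_empty (s : ℕ → ℕ) {q : ℕ} {r : ℕ → ℕ} (π : ℕ → ℕ) {m : ℕ} {X' : Finset Ctr3}
    (n : ℕ) {acc : Finset Ctr3}
    (hem : ∀ z ∈ X', z.2.1 = m → (acc.filter fun y => y.2.2 = z.2.2).card < r z.2.2 →
      (∀ y ∈ acc, y.1 ≠ z.1) → False) :
    run3 s q r π m X' (n+1) acc = acc := by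
  rw [run3]
  split_ifs with h1 h2
  · rfl
  · obtain ⟨z, hz⟩ := h2
    rw [Finset.mem_filter] at hz
    exact absurd hz.2.1 fun hh => hem z hz.1 hh hz.2.2.1 hz.2.2.2
  · rfl

lemma run3_step (s : ℕ → ℕ) {q : ℕ} {r : ℕ → ℕ} {π : ℕ → ℕ} {m : ℕ} {X' : Finset Ctr3}
    (n : ℕ) {acc : Finset Ctr3} {x : Ctr3}
    (hq : ¬ q ≤ acc.sum (fun x => s x.1))
    (hxX : x ∈ X') (hm : x.2.1 = m)
    (hcap : (acc.filter fun y => y.2.2 = x.2.2).card < r x.2.2)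
    (hnew : ∀ y ∈ acc, y.1 ≠ x.1)
    (hmin : ∀ z ∈ X', z.2.1 = m → (acc.filter fun y => y.2.2 = z.2.2).card < r z.2.2 →
      (∀ y ∈ acc, y.1 ≠ z.1) → key π x ≤ key π z) :
    run3 s q r π m X' (n+1) acc = run3 s q r π m X' n (insert x acc) := by
  rw [run3, if_neg hq]
  split_ifs with h2
  · congr 1
    · congr 1
      apply pick3_eq (Finset.mem_filter.mpr ⟨hxX, hm, hcap, hnew⟩) hm
      intro z hz
      rw [Finset.mem_filter] at hz
      exact hmin z hz.1 hz.2.1 hz.2.2.1 hz.2.2.2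
  · exact absurd ⟨x, Finset.mem_filter.mpr ⟨hxX, hm, hcap, hnew⟩⟩ h2

lemma pick3_spec {π : ℕ → ℕ} {m : ℕ} {Z : Finset Ctr3} {h : Z.Nonempty}
    (hZm : ∀ z ∈ Z, z.2.1 = m) :
    ∃ p, pick3 π m Z h = p ∧ p ∈ Z ∧ ∀ z ∈ Z, key π p ≤ key π z := by
  obtain ⟨z₁, hz₁, hz₁k⟩ : ∃ z₁ ∈ Z, (fun z => toLex ((π z.1 : ℕ), toLex (z.2.2, z.1))) z₁
      = (Z.image fun z => toLex ((π z.1 : ℕ), toLex (z.2.2, z.1))).min' (h.image _) :=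
    Finset.mem_image.mp (Finset.min'_mem _ _)
  have hmin : ∀ z ∈ Z, key π z₁ ≤ key π z := by
    intro z hz
    have h1 := Finset.min'_le (Z.image fun z => toLex ((π z.1 : ℕ), toLex (z.2.2, z.1)))
      _ (Finset.mem_image_of_mem _ hz)
    rw [← hz₁k] at h1
    exact h1
  exact ⟨z₁, pick3_eq hz₁ (hZm z₁ hz₁) hmin, hz₁, hmin⟩

/-- If `x`'s key is minimal among `m`-contracts of `X'` and already satisfies
the quota on its own, the choice is exactly `{x}`. -/
lemma chat_one {s : ℕ → ℕ} {q : ℕ} {r π : ℕ → ℕ} {m : ℕ} {X' : Finset Ctr3} {x : Ctr3}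
    (hx : x ∈ X') (hm : x.2.1 = m) (hr : 0 < r x.2.2) (hq0 : 0 < q) (hqs : q ≤ s x.1)
    (hmin : ∀ z ∈ X', z.2.1 = m → key π x ≤ key π z) :
    Chat3 s q r π m X' = {x} := by
  unfold Chat3
  obtain ⟨k, hk⟩ : ∃ k, X'.card + 1 = k + 2 :=
    ⟨X'.card - 1, by have := Finset.card_pos.mpr ⟨x, hx⟩; omega⟩
  rw [hk]
  rw [run3_step s (k+1) (by simp; omega) hx hm (by simpa using hr) (by simp)
    (fun z hz hzm _ _ => hmin z hz hzm)]
  rw [run3_stop s r π m X' k (by simpa using hqs)]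
  simp

/-- If there are no `m`-contracts, the choice is empty. -/
lemma chat_empty {s : ℕ → ℕ} {q : ℕ} {r π : ℕ → ℕ} {m : ℕ} {X' : Finset Ctr3}
    (hq0 : 0 < q) (hnone : ∀ z ∈ X', z.2.1 ≠ m) :
    Chat3 s q r π m X' = ∅ := by
  unfold Chat3
  rw [run3_empty s π X'.card (fun z hz hzm _ _ => hnone z hz hzm)]

/-- With quota 1 the choice has at most one element. -/
lemma chat_card_le_one {s : ℕ → ℕ} {q : ℕ} {r π : ℕ → ℕ} {m : ℕ} {X' : Finset Ctr3}
    (hpos : ∀ a, q ≤ s a) :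
    (Chat3 s q r π m X').card ≤ 1 := by
  unfold Chat3
  rw [run3]
  split_ifs with h1 h2
  · simp
  · rcases Nat.eq_zero_or_eq_succ_pred X'.card with hc | hc
    · rw [hc, run3]; simp
    · rw [hc, run3_stop]
      · simp
      · simpa using hpos _
  · simp

/-- `x` is chosen when it is key-minimal among the `m`-contracts
and the quota is reachable only after it (membership form). -/
lemma mem_chat_one {s : ℕ → ℕ} {q : ℕ} {r π : ℕ → ℕ} {m : ℕ} {X' : Finset Ctr3} {x : Ctr3}
    (hx : x ∈ X') (hm : x.2.1 = m) (hr : 0 < r x.2.2) (hq0 : 0 < q) (hqs : q ≤ s x.1)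
    (hmin : ∀ z ∈ X', z.2.1 = m → key π x ≤ key π z) :
    x ∈ Chat3 s q r π m X' := by
  rw [chat_one hx hm hr hq0 hqs hmin]; simp

/-- `x` (a low-wait contract) is chosen if every `m`-contract either belongs
to seeker `b` (whose weight is below quota) or has key at least `x`'s. -/
lemma mem_chat_two {s : ℕ → ℕ} {q : ℕ} {r π : ℕ → ℕ} {m b : ℕ} {X' : Finset Ctr3} {x : Ctr3}
    (hx : x ∈ X') (hm : x.2.1 = m) (hw : x.2.2 = 0) (hr2 : r 0 = 2)
    (hrpos : ∀ w, 0 < r w)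
    (hq0 : 0 < q) (hb : x.1 ≠ b) (hsb : s b < q)
    (hmin : ∀ z ∈ X', z.2.1 = m → z.1 = b ∨ key π x ≤ key π z) :
    x ∈ Chat3 s q r π m X' := by
  unfold Chat3
  obtain ⟨k, hk⟩ : ∃ k, X'.card + 1 = k + 2 :=
    ⟨X'.card - 1, by have := Finset.card_pos.mpr ⟨x, hx⟩; omega⟩
  rw [hk]
  have hrx : 0 < r x.2.2 := hrpos _
  by_cases hall : ∀ z ∈ X', z.2.1 = m → key π x ≤ key π z
  · rw [run3_step s (k+1) (by simp; omega) hx hm (by simpa using hrx) (by simp)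
      (fun z hz hzm _ _ => hall z hz hzm)]
    exact run3_mono s q r π m X' (k+1) _ (Finset.mem_insert_self _ _)
  · push_neg at hall
    obtain ⟨z₀, hz₀X, hz₀m, hz₀k⟩ := hall
    rw [run3, if_neg (by simp; omega)]
    split_ifs with h2
    swap
    · exact absurd ⟨x, Finset.mem_filter.mpr ⟨hx, hm, by simpa using hrx, by simp⟩⟩ h2
    obtain ⟨p, hpe, hpZ, hpmin⟩ :=
      pick3_spec (h := h2) (fun z hz => (Finset.mem_filter.mp hz).2.1)
    rw [hpe]
    have hpX : p ∈ X' := (Finset.mem_filter.mp hpZ).1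
    have hpm : p.2.1 = m := (Finset.mem_filter.mp hpZ).2.1
    have hkey : key π p ≤ key π z₀ :=
      hpmin z₀ (Finset.mem_filter.mpr ⟨hz₀X, hz₀m, by simpa using hrpos _, by simp⟩)
    have hpb : p.1 = b := by
      rcases hmin p hpX hpm with h | h
      · exact h
      · exact absurd (le_trans h hkey) (not_le.mpr hz₀k)
    have hpx : p ≠ x := fun he => hb (he ▸ hpb)
    rw [run3_step s k
      (by simp [hpb]; omega)
      hx hm
      (by
        have hcb : (Finset.filter (fun y => y.2.2 = x.2.2) (insert p (∅ : Finset Ctr3))).card ≤ 1 :=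
          le_trans (Finset.card_filter_le _ _) (by simp)
        rw [hw] at hcb ⊢
        rw [hr2]
        omega)
      (by intro y hy; simp at hy; rw [hy, hpb]; exact fun he => hb he.symm)
      (by
        intro z hz hzm _ hnew
        rcases hmin z hz hzm with h | h
        · exact absurd (hpb.trans h.symm) (hnew p (Finset.mem_insert_self _ _))
        · exact h)]
    exact run3_mono s q r π m X' k _ (Finset.mem_insert_self _ _)

/-- The choice from a set whose `m`-contracts are exactly the contracts of the
two seekers `u.1` and `v.1`, with `u` then `v` key-minimal. -/
lemma chat_pair {s : ℕ → ℕ} {q : ℕ} {r π : ℕ → ℕ} {m : ℕ} {X' : Finset Ctr3} {u v : Ctr3}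
    (hu : u ∈ X') (hv : v ∈ X') (hum : u.2.1 = m) (hvm : v.2.1 = m)
    (huw : u.2.2 = 0) (hvw : v.2.2 = 0) (hr2 : r 0 = 2) (hne : u.1 ≠ v.1)
    (hq0 : 0 < q) (hqu : s u.1 < q)
    (hminu : ∀ z ∈ X', z.2.1 = m → key π u ≤ key π z)
    (hminv : ∀ z ∈ X', z.2.1 = m → z.1 ≠ u.1 → key π v ≤ key π z)
    (honly : ∀ z ∈ X', z.2.1 = m → z.1 = u.1 ∨ z.1 = v.1) :
    Chat3 s q r π m X' = {u, v} := by
  unfold Chat3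
  have huv : u ≠ v := fun he => hne (he ▸ rfl)
  obtain ⟨k, hk⟩ : ∃ k, X'.card + 1 = k + 3 :=
    ⟨X'.card - 2, by have := Finset.one_lt_card.mpr ⟨u, hu, v, hv, huv⟩; omega⟩
  rw [hk]
  rw [run3_step s (k+2) (by simp; omega) hu hum
    (by rw [huw, hr2]; simp) (by simp)
    (fun z hz hzm _ _ => hminu z hz hzm)]
  rw [run3_step s (k+1)
    (by simp; omega)
    hv hvm
    (by
      have hcb : (Finset.filter (fun y => y.2.2 = v.2.2) (insert u (∅ : Finset Ctr3))).card ≤ 1 :=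
        le_trans (Finset.card_filter_le _ _) (by simp)
      rw [hvw] at hcb ⊢
      rw [hr2]
      omega)
    (by intro y hy; simp at hy; rw [hy]; exact hne)
    (by
      intro z hz hzm _ hnew
      exact hminv z hz hzm (hnew u (Finset.mem_insert_self _ _)).symm)]
  have hout : insert v (insert u (∅ : Finset Ctr3)) = {u, v} := by
    rw [Finset.pair_comm]; rfl
  by_cases hlast : q ≤ s u.1 + s v.1
  · rw [run3_stop s r π m X' k (by rw [Finset.sum_insert (by simp [huv.symm])]; simp; omega)]
    exact hout
  · rw [run3_empty s π k (by
      intro z hz hzm _ hnew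
      rcases honly z hz hzm with h | h
      · exact hnew u (by simp) h.symm
      · exact hnew v (by simp) h.symm)]
    exact hout

section Helpers16

lemma kmin0 : ∀ z : Ctr3, key (π16 0) (0,0,0) ≤ key (π16 0) z := by
  intro z; rw [key_le_iff]; simp [π16]; omega

lemma kmin8 : ∀ z : Ctr3, key (π16 1) (2,1,0) ≤ key (π16 1) z := by
  intro z; rw [key_le_iff]; simp [π16]; omega

lemma kmin1 : ∀ z : Ctr3, z.1 = 0 → key (π16 1) (0,1,0) ≤ key (π16 1) z := by
  intro z h; rw [key_le_iff]; simp [π16, h]; omega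

lemma kmin4 : ∀ z : Ctr3, z.1 ≤ 1 → key (π16 1) (1,1,0) ≤ key (π16 1) z := by
  intro z h; rw [key_le_iff]; simp [π16]; omega

lemma kmin5 : ∀ z : Ctr3, 1 ≤ z.1 → key (π16 0) (1,0,0) ≤ key (π16 0) z := by
  intro z h; rw [key_le_iff]; simp [π16]; omega

lemma kmin6 : ∀ z : Ctr3, 1 ≤ z.1 → key (π16 2) (1,2,0) ≤ key (π16 2) z := by
  intro z h; rw [key_le_iff]; simp [π16]; omega

lemma kmin7 : ∀ z : Ctr3, 2 ≤ z.1 → key (π16 0) (2,0,0) ≤ key (π16 0) z := by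
  intro z h; rw [key_le_iff]; simp [π16]; omega

end Helpers16

/-- Example 7: with burden-sizes `s(a₁) > s(a₂) ≥ s(a₃)`,
the Example 7 quotas, capacities, priorities, true preferences
`a₁ : x₁ − x₂ − x₃ − …`, `a₂ : x₄ − x₅ − x₆ − …`, `a₃ : x₇ − x₈ − …` (where
`x₁ = (a₁,m₂,w_l)`, `x₂ = (a₁,m₁,w_l)`, `x₃ = (a₁,m₃,w_l)`,
`x₄ = (a₂,m₂,w_l)`, `x₅ = (a₂,m₁,w_l)`, `x₆ = (a₂,m₃,w_l)`,
`x₇ = (a₃,m₁,w_l)`, `x₈ = (a₃,m₂,w_l)`), the allocation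
`Y₁ = {x₂, x₆, x₈}` is the unique stable allocation under the true profile,
while under `a₂`'s misreport `x₅ − x₆ − x₄` both `Y₁` and
`Y₂ = {x₁, x₅, x₇}` are stable. -/
theorem ex7_stable_allocations (s : ℕ → ℕ) (hpos : ∀ a, 0 < s a)
    (h12 : s 2 ≤ s 1) (h01 : s 1 < s 0)
    (pref : ℕ → Ctr3 → ℕ) (hinj : ∀ a, Function.Injective (pref a))
    (h1a : ∀ z : Ctr3, z.1 = 0 → z ≠ (0, 1, 0) →
      pref 0 (0, 1, 0) < pref 0 z)
    (h1b : ∀ z : Ctr3, z.1 = 0 → z ≠ (0, 1, 0) → z ≠ (0, 0, 0) →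
      pref 0 (0, 0, 0) < pref 0 z)
    (h1c : ∀ z : Ctr3, z.1 = 0 → z ≠ (0, 1, 0) → z ≠ (0, 0, 0) →
      z ≠ (0, 2, 0) → pref 0 (0, 2, 0) < pref 0 z)
    (h2a : ∀ z : Ctr3, z.1 = 1 → z ≠ (1, 1, 0) →
      pref 1 (1, 1, 0) < pref 1 z)
    (h2b : ∀ z : Ctr3, z.1 = 1 → z ≠ (1, 1, 0) → z ≠ (1, 0, 0) →
      pref 1 (1, 0, 0) < pref 1 z)
    (h2c : ∀ z : Ctr3, z.1 = 1 → z ≠ (1, 1, 0) → z ≠ (1, 0, 0) →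
      z ≠ (1, 2, 0) → pref 1 (1, 2, 0) < pref 1 z)
    (h3a : ∀ z : Ctr3, z.1 = 2 → z ≠ (2, 0, 0) →
      pref 2 (2, 0, 0) < pref 2 z)
    (h3b : ∀ z : Ctr3, z.1 = 2 → z ≠ (2, 0, 0) → z ≠ (2, 1, 0) →
      pref 2 (2, 1, 0) < pref 2 z)
    (pref2 : Ctr3 → ℕ) (hinj2 : Function.Injective pref2)
    (k2a : ∀ z : Ctr3, z.1 = 1 → z ≠ (1, 0, 0) →
      pref2 (1, 0, 0) < pref2 z)
    (k2b : ∀ z : Ctr3, z.1 = 1 → z ≠ (1, 0, 0) → z ≠ (1, 2, 0) →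
      pref2 (1, 2, 0) < pref2 z)
    (k2c : ∀ z : Ctr3, z.1 = 1 → z ≠ (1, 0, 0) → z ≠ (1, 2, 0) →
      z ≠ (1, 1, 0) → pref2 (1, 1, 0) < pref2 z)
    :
    (Alloc16 s {(0, 0, 0), (1, 2, 0), (2, 1, 0)} ∧
      Stable16 s pref {(0, 0, 0), (1, 2, 0), (2, 1, 0)}) ∧
    (∀ Y : Finset Ctr3, Alloc16 s Y → Stable16 s pref Y →
      Y = {(0, 0, 0), (1, 2, 0), (2, 1, 0)}) ∧
    (Stable16 s (fun a => if a = 1 then pref2 else pref a)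
      {(0, 0, 0), (1, 2, 0), (2, 1, 0)}) ∧
    (Alloc16 s {(0, 1, 0), (1, 0, 0), (2, 0, 0)} ∧
      Stable16 s (fun a => if a = 1 then pref2 else pref a)
        {(0, 1, 0), (1, 0, 0), (2, 0, 0)}) := by
  -- positivity facts
  have hq16pos : ∀ m, 0 < q16 s m := by
    intro m; unfold q16; split_ifs
    · exact hpos 0
    · have := hpos 0; omega
    · omega
  have hr16pos : ∀ m w, 0 < r16 s m w := by
    intro m w; unfold r16; split_ifs
    · omega
    · have := hpos 0; omega
  -- allocations
  have halloc : ∀ (Y : Finset Ctr3) (u v : Ctr3),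
      (∀ x ∈ Y, x.1 < 3 ∧ x.2.1 < 4 ∧ x.2.2 < 2) →
      (∀ x ∈ Y, x.2.2 = 0) → Y.card = 3 → u ∈ Y → v ∈ Y → u.2.1 ≠ v.2.1 →
      (∀ a : ℕ, (Y.filter fun x => x.1 = a).card ≤ 1) →
      Alloc16 s Y := by
    intro Y u v hb hw0 hc3 hu hv huv hsk
    refine ⟨hb, hsk, ?_⟩
    intro m w
    by_cases hw : w = 0
    · subst hw
      by_contra hcon
      push_neg at hcon
      rw [show r16 s m 0 = 2 by simp [r16]] at hcon
      have hsub := Finset.filter_subset (fun x => x.2.1 = m ∧ x.2.2 = 0) Y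
      have hle := Finset.card_le_card hsub
      have heq : Finset.filter (fun x => x.2.1 = m ∧ x.2.2 = 0) Y = Y :=
        Finset.eq_of_subset_of_card_le hsub (by omega)
      have hum : u.2.1 = m := by
        have := hu; rw [← heq, Finset.mem_filter] at this; exact this.2.1
      have hvm : v.2.1 = m := by
        have := hv; rw [← heq, Finset.mem_filter] at this; exact this.2.1
      exact huv (hum.trans hvm.symm)
    · have hemp : Finset.filter (fun x => x.2.1 = m ∧ x.2.2 = w) Y = ∅ := by
        rw [Finset.filter_eq_empty_iff]
        intro z hz hc
        exact hw (hc.2.symm.trans (hw0 z hz))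
      rw [hemp]
      simp
  have hseek1 : ∀ a : ℕ,
      ((({(0,0,0),(1,2,0),(2,1,0)} : Finset Ctr3)).filter fun x => x.1 = a).card ≤ 1 := by
    intro a
    rcases Nat.lt_or_ge a 3 with h | h
    · interval_cases a <;> decide
    · rw [Finset.filter_eq_empty_iff.mpr]
      · simp
      · intro z hz
        simp only [Finset.mem_insert, Finset.mem_singleton] at hz
        rcases hz with rfl | rfl | rfl <;> simp <;> omega
  have hseek2 : ∀ a : ℕ,
      ((({(0,1,0),(1,0,0),(2,0,0)} : Finset Ctr3)).filter fun x => x.1 = a).card ≤ 1 := by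
    intro a
    rcases Nat.lt_or_ge a 3 with h | h
    · interval_cases a <;> decide
    · rw [Finset.filter_eq_empty_iff.mpr]
      · simp
      · intro z hz
        simp only [Finset.mem_insert, Finset.mem_singleton] at hz
        rcases hz with rfl | rfl | rfl <;> simp <;> omega
  have halloc1 : Alloc16 s {(0,0,0),(1,2,0),(2,1,0)} := by
    refine halloc _ (0,0,0) (1,2,0) (by decide) (by decide) (by decide)
      (by decide) (by decide) (by decide) hseek1
  have halloc2 : Alloc16 s {(0,1,0),(1,0,0),(2,0,0)} := by
    refine halloc _ (0,1,0) (1,0,0) (by decide) (by decide) (by decide)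
      (by decide) (by decide) (by decide) hseek2
  -- condition 1 for Y₁
  have hcondY1 : ∀ m : ℕ, Chat3 s (q16 s m) (r16 s m) (π16 m) m
      ({(0,0,0),(1,2,0),(2,1,0)} : Finset Ctr3) =
      ({(0,0,0),(1,2,0),(2,1,0)} : Finset Ctr3).filter fun x => x.2.1 = m := by
    intro m
    by_cases hm0 : m = 0
    · subst hm0
      rw [chat_one (x := ((0:ℕ),(0:ℕ),(0:ℕ))) (by decide) rfl (hr16pos 0 0)
        (hq16pos 0) (by simp [q16]) (fun z _ _ => kmin0 z)]
      decide
    · by_cases hm1 : m = 1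
      · subst hm1
        rw [chat_one (x := ((2:ℕ),(1:ℕ),(0:ℕ))) (by decide) rfl (hr16pos 1 0)
          (hq16pos 1) (by simp [q16]; exact hpos 2) (fun z _ _ => kmin8 z)]
        decide
      · by_cases hm2 : m = 2
        · subst hm2
          rw [chat_one (x := ((1:ℕ),(2:ℕ),(0:ℕ))) (by decide) rfl (hr16pos 2 0)
            (hq16pos 2) (by simp [q16]; exact hpos 1) ?_]
          · decide
          · intro z hz hzm
            simp only [Finset.mem_insert, Finset.mem_singleton] at hz
            rcases hz with rfl | rfl | rfl
            · exact absurd hzm (by decide)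
            · exact le_refl _
            · exact absurd hzm (by decide)
        · rw [chat_empty (hq16pos m) ?_]
          · symm
            rw [Finset.filter_eq_empty_iff]
            intro z hz
            simp only [Finset.mem_insert, Finset.mem_singleton] at hz
            rcases hz with rfl | rfl | rfl <;> simp <;> omega
          · intro z hz
            simp only [Finset.mem_insert, Finset.mem_singleton] at hz
            rcases hz with rfl | rfl | rfl <;> simp <;> omega
  -- condition 1 for Y₂
  have hcondY2 : ∀ m : ℕ, Chat3 s (q16 s m) (r16 s m) (π16 m) m
      ({(0,1,0),(1,0,0),(2,0,0)} : Finset Ctr3) =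
      ({(0,1,0),(1,0,0),(2,0,0)} : Finset Ctr3).filter fun x => x.2.1 = m := by
    intro m
    by_cases hm0 : m = 0
    · subst hm0
      rw [chat_pair (u := ((1:ℕ),(0:ℕ),(0:ℕ))) (v := ((2:ℕ),(0:ℕ),(0:ℕ)))
        (by decide) (by decide) rfl rfl rfl rfl (by simp [r16]) (by decide)
        (hq16pos 0) (by simp [q16]; exact h01) ?_ ?_ ?_]
      · decide
      · intro z hz hzm
        simp only [Finset.mem_insert, Finset.mem_singleton] at hz
        rcases hz with rfl | rfl | rfl
        · exact absurd hzm (by decide)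
        · exact le_refl _
        · exact kmin5 _ (by decide)
      · intro z hz hzm hz1
        simp only [Finset.mem_insert, Finset.mem_singleton] at hz
        rcases hz with rfl | rfl | rfl
        · exact absurd hzm (by decide)
        · exact absurd rfl hz1
        · exact le_refl _
      · intro z hz hzm
        simp only [Finset.mem_insert, Finset.mem_singleton] at hz
        rcases hz with rfl | rfl | rfl
        · exact absurd hzm (by decide)
        · exact Or.inl rfl
        · exact Or.inr rfl
    · by_cases hm1 : m = 1
      · subst hm1
        rw [chat_one (x := ((0:ℕ),(1:ℕ),(0:ℕ))) (by decide) rfl (hr16pos 1 0)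
          (hq16pos 1) (by simp [q16]; exact hpos 0) ?_]
        · decide
        · intro z hz hzm
          simp only [Finset.mem_insert, Finset.mem_singleton] at hz
          rcases hz with rfl | rfl | rfl
          · exact le_refl _
          · exact absurd hzm (by decide)
          · exact absurd hzm (by decide)
      · rw [chat_empty (hq16pos m) ?_]
        · symm
          rw [Finset.filter_eq_empty_iff]
          intro z hz
          simp only [Finset.mem_insert, Finset.mem_singleton] at hz
          rcases hz with rfl | rfl | rfl <;> simp <;> omega
        · intro z hz
          simp only [Finset.mem_insert, Finset.mem_singleton] at hz
          rcases hz with rfl | rfl | rfl <;> simp <;> omega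
  -- condition 2 for Y₁ under true preferences
  have hblock1 : ∀ x : Ctr3, x.1 < 3 → x.2.1 < 4 → x.2.2 < 2 →
      x ∉ ({(0,0,0),(1,2,0),(2,1,0)} : Finset Ctr3) →
      (∀ y ∈ ({(0,0,0),(1,2,0),(2,1,0)} : Finset Ctr3), y.1 = x.1 →
        pref x.1 x < pref x.1 y) →
      x ∉ Chat3 s (q16 s x.2.1) (r16 s x.2.1) (π16 x.2.1) x.2.1
        (insert x {(0,0,0),(1,2,0),(2,1,0)}) := by
    intro x hx1 hx2 hx3 hxnot hxpref
    obtain ⟨a, m, w⟩ := x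
    replace hx1 : a < 3 := hx1
    replace hx2 : m < 4 := hx2
    replace hx3 : w < 2 := hx3
    interval_cases a <;> interval_cases m <;> interval_cases w <;>
    first
    | (exact absurd (by decide) hxnot)
    | (exact absurd (hxpref (0,0,0) (by decide) rfl)
        (not_lt.mpr (le_of_lt (h1b _ rfl (by decide) (by decide)))))
    | (exact absurd (hxpref (1,2,0) (by decide) rfl)
        (not_lt.mpr (le_of_lt (h2c _ rfl (by decide) (by decide) (by decide)))))
    | (exact absurd (hxpref (2,1,0) (by decide) rfl)
        (not_lt.mpr (le_of_lt (h3b _ rfl (by decide) (by decide)))))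
    | (rw [chat_one (x := ((2:ℕ),(1:ℕ),(0:ℕ))) (by decide) rfl (hr16pos 1 0)
        (hq16pos 1) (by simp [q16]; exact hpos 2) (fun z _ _ => kmin8 z)]; decide)
    | (rw [chat_one (x := ((0:ℕ),(0:ℕ),(0:ℕ))) (by decide) rfl (hr16pos 0 0)
        (hq16pos 0) (by simp [q16]) (fun z _ _ => kmin0 z)]; decide)
  -- condition 2 for Y₁ under the misreport
  have hblock1' : ∀ x : Ctr3, x.1 < 3 → x.2.1 < 4 → x.2.2 < 2 →
      x ∉ ({(0,0,0),(1,2,0),(2,1,0)} : Finset Ctr3) →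
      (∀ y ∈ ({(0,0,0),(1,2,0),(2,1,0)} : Finset Ctr3), y.1 = x.1 →
        (fun a => if a = 1 then pref2 else pref a) x.1 x <
        (fun a => if a = 1 then pref2 else pref a) x.1 y) →
      x ∉ Chat3 s (q16 s x.2.1) (r16 s x.2.1) (π16 x.2.1) x.2.1
        (insert x {(0,0,0),(1,2,0),(2,1,0)}) := by
    intro x hx1 hx2 hx3 hxnot hxpref
    obtain ⟨a, m, w⟩ := x
    replace hx1 : a < 3 := hx1
    replace hx2 : m < 4 := hx2
    replace hx3 : w < 2 := hx3
    interval_cases a <;> interval_cases m <;> interval_cases w <;>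
    first
    | (exact absurd (by decide) hxnot)
    | (exact absurd (by simpa using hxpref (0,0,0) (by decide) rfl)
        (not_lt.mpr (le_of_lt (h1b _ rfl (by decide) (by decide)))))
    | (exact absurd (by simpa using hxpref (1,2,0) (by decide) rfl)
        (not_lt.mpr (le_of_lt (k2b _ rfl (by decide) (by decide)))))
    | (exact absurd (by simpa using hxpref (2,1,0) (by decide) rfl)
        (not_lt.mpr (le_of_lt (h3b _ rfl (by decide) (by decide)))))
    | (rw [chat_one (x := ((2:ℕ),(1:ℕ),(0:ℕ))) (by decide) rfl (hr16pos 1 0)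
        (hq16pos 1) (by simp [q16]; exact hpos 2) (fun z _ _ => kmin8 z)]; decide)
    | (rw [chat_one (x := ((0:ℕ),(0:ℕ),(0:ℕ))) (by decide) rfl (hr16pos 0 0)
        (hq16pos 0) (by simp [q16]) (fun z _ _ => kmin0 z)]; decide)
  -- condition 2 for Y₂ under the misreport
  have hblock2 : ∀ x : Ctr3, x.1 < 3 → x.2.1 < 4 → x.2.2 < 2 →
      x ∉ ({(0,1,0),(1,0,0),(2,0,0)} : Finset Ctr3) →
      (∀ y ∈ ({(0,1,0),(1,0,0),(2,0,0)} : Finset Ctr3), y.1 = x.1 →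
        (fun a => if a = 1 then pref2 else pref a) x.1 x <
        (fun a => if a = 1 then pref2 else pref a) x.1 y) →
      x ∉ Chat3 s (q16 s x.2.1) (r16 s x.2.1) (π16 x.2.1) x.2.1
        (insert x {(0,1,0),(1,0,0),(2,0,0)}) := by
    intro x hx1 hx2 hx3 hxnot hxpref
    obtain ⟨a, m, w⟩ := x
    replace hx1 : a < 3 := hx1
    replace hx2 : m < 4 := hx2
    replace hx3 : w < 2 := hx3
    interval_cases a <;> interval_cases m <;> interval_cases w <;>
    first
    | (exact absurd (by decide) hxnot)
    | (exact absurd (by simpa using hxpref (0,1,0) (by decide) rfl)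
        (not_lt.mpr (le_of_lt (h1a _ rfl (by decide)))))
    | (exact absurd (by simpa using hxpref (1,0,0) (by decide) rfl)
        (not_lt.mpr (le_of_lt (k2a _ rfl (by decide)))))
    | (exact absurd (by simpa using hxpref (2,0,0) (by decide) rfl)
        (not_lt.mpr (le_of_lt (h3a _ rfl (by decide)))))
  -- uniqueness
  have huniqY : ∀ Y : Finset Ctr3, Alloc16 s Y → Stable16 s pref Y →
      Y = {(0,0,0),(1,2,0),(2,1,0)} := by
    intro Y hA hS
    obtain ⟨hbound, hone, hcap⟩ := hA
    obtain ⟨hC, hblock⟩ := hS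
    have huniq : ∀ y ∈ Y, ∀ y' ∈ Y, y.1 = y'.1 → y = y' := by
      intro y hy y' hy' he
      exact Finset.card_le_one.mp (hone y.1) y (Finset.mem_filter.mpr ⟨hy, rfl⟩)
        y' (Finset.mem_filter.mpr ⟨hy', he.symm⟩)
    have hq1 : ∀ u ∈ Y, ∀ v ∈ Y, u.2.1 = 1 → v.2.1 = 1 → u = v := by
      intro u hu v hv hum hvm
      have h1 : (Y.filter fun x => x.2.1 = 1).card ≤ 1 := by
        rw [← hC 1]
        exact chat_card_le_one (by intro a; simp [q16]; exact hpos a)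
      exact Finset.card_le_one.mp h1 u (Finset.mem_filter.mpr ⟨hu, hum⟩)
        v (Finset.mem_filter.mpr ⟨hv, hvm⟩)
    have hm0 : (0,0,0) ∈ Y → ∀ v ∈ Y, v.2.1 = 0 → v = (0,0,0) := by
      intro h2 v hv hvm
      have hcc : Chat3 s (q16 s 0) (r16 s 0) (π16 0) 0 Y = {(0,0,0)} :=
        chat_one h2 rfl (hr16pos 0 0) (hq16pos 0) (by simp [q16])
          (fun z _ _ => kmin0 z)
      have hfe := hC 0
      rw [hcc] at hfe
      have hvf : v ∈ Y.filter (fun x => x.2.1 = 0) := Finset.mem_filter.mpr ⟨hv, hvm⟩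
      rw [← hfe] at hvf
      simpa using hvf
    have hstep1 : (0,1,0) ∈ Y ∨ (0,0,0) ∈ Y := by
      by_contra hcon
      push_neg at hcon
      obtain ⟨hn1, hn2⟩ := hcon
      refine hblock (0,0,0) (by decide) (by decide) (by decide) hn2 ?_ ?_
      · intro y hy hy1
        exact h1b y hy1 (fun he => hn1 (he ▸ hy)) (fun he => hn2 (he ▸ hy))
      · exact mem_chat_one (Finset.mem_insert_self _ _) rfl (hr16pos 0 0)
          (hq16pos 0) (by simp [q16]) (fun z _ _ => kmin0 z)
    have hcaseA : (0,1,0) ∈ Y → False := by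
      intro h1m
      have ha1 : ∀ y ∈ Y, y.1 = 0 → y = (0,1,0) := fun y hy hy1 => huniq y hy _ h1m hy1
      have h7 : (2,0,0) ∈ Y := by
        by_contra h7n
        refine hblock (2,0,0) (by decide) (by decide) (by decide) h7n
          (fun y hy hy2 => h3a y hy2 (fun he => h7n (he ▸ hy))) ?_
        refine mem_chat_two (b := 1) (Finset.mem_insert_self _ _) rfl rfl
          (by simp [r16]) (fun w => hr16pos 0 w) (hq16pos 0) (by decide)
          (by simp [q16]; exact h01) ?_
        intro z hz hzm
        rcases Finset.mem_insert.mp hz with rfl | hzY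
        · exact Or.inr (le_refl _)
        · have hz3 := (hbound z hzY).1
          have hcases : z.1 = 0 ∨ z.1 = 1 ∨ z.1 = 2 := by omega
          rcases hcases with h | h | h
          · have hz1 := ha1 z hzY h
            rw [hz1] at hzm
            exact absurd hzm (by decide)
          · exact Or.inl h
          · exact Or.inr (kmin7 z (by omega))
      have ha3 : ∀ y ∈ Y, y.1 = 2 → y = (2,0,0) := fun y hy hy2 => huniq y hy _ h7 hy2
      have h4 : (1,1,0) ∈ Y := by
        by_contra h4n
        refine hblock (1,1,0) (by decide) (by decide) (by decide) h4n
          (fun y hy hy1 => h2a y hy1 (fun he => h4n (he ▸ hy))) ?_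
        refine mem_chat_one (Finset.mem_insert_self _ _) rfl (hr16pos 1 0)
          (hq16pos 1) (by simp [q16]; exact hpos 1) ?_
        intro z hz hzm
        rcases Finset.mem_insert.mp hz with rfl | hzY
        · exact le_refl _
        · have hz3 := (hbound z hzY).1
          have hcases : z.1 = 0 ∨ z.1 = 1 ∨ z.1 = 2 := by omega
          rcases hcases with h | h | h
          · exact kmin4 z (by omega)
          · exact kmin4 z (by omega)
          · have hz1 := ha3 z hzY h
            rw [hz1] at hzm
            exact absurd hzm (by decide)
      have hcontra := hq1 _ h1m _ h4 rfl rfl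
      exact absurd hcontra (by decide)
    rcases hstep1 with h1m | h2m
    · exact absurd h1m (fun h => hcaseA h)
    have ha1 : ∀ y ∈ Y, y.1 = 0 → y = (0,0,0) := fun y hy hy1 => huniq y hy _ h2m hy1
    have hx1n : (0,1,0) ∉ Y := by
      intro hc
      have := ha1 _ hc rfl
      exact absurd this (by decide)
    have hm1occ : ∃ c ∈ Y, c.2.1 = 1 ∧ (c.1 = 1 ∨ c.1 = 2) := by
      by_contra hno
      push_neg at hno
      refine hblock (0,1,0) (by decide) (by decide) (by decide) hx1n
        (fun y hy hy1 => h1a y hy1 (fun he => hx1n (he ▸ hy))) ?_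
      refine mem_chat_one (Finset.mem_insert_self _ _) rfl (hr16pos 1 0)
        (hq16pos 1) (by simp [q16]; exact hpos 0) ?_
      intro z hz hzm
      rcases Finset.mem_insert.mp hz with rfl | hzY
      · exact le_refl _
      · have hz3 := (hbound z hzY).1
        have hcases : z.1 = 0 ∨ z.1 = 1 ∨ z.1 = 2 := by omega
        rcases hcases with h | h | h
        · exact kmin1 z h
        · exact absurd h (hno z hzY hzm).1
        · exact absurd h (hno z hzY hzm).2
    obtain ⟨c, hcY, hcm, hcS⟩ := hm1occ
    rcases hcS with hc1 | hc2
    · -- a₂ at m₁: contradiction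
      exfalso
      have hno3 : ∀ z ∈ Y, z.2.1 = 1 → z.1 ≠ 2 := by
        intro z hz hzm hz2
        have hzc := hq1 z hz c hcY hzm hcm
        rw [hzc] at hz2
        omega
      have hc4 : c = (1,1,0) := by
        by_contra hcn
        have ha2 : ∀ y ∈ Y, y.1 = 1 → y = c := fun y hy hy1 =>
          huniq y hy c hcY (by rw [hy1, hc1])
        have h4n : (1,1,0) ∉ Y := fun hmem => hcn (ha2 _ hmem rfl).symm
        refine hblock (1,1,0) (by decide) (by decide) (by decide) h4n
          (fun y hy hy1 => h2a y hy1 (fun he => h4n (he ▸ hy))) ?_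
        refine mem_chat_one (Finset.mem_insert_self _ _) rfl (hr16pos 1 0)
          (hq16pos 1) (by simp [q16]; exact hpos 1) ?_
        intro z hz hzm
        rcases Finset.mem_insert.mp hz with rfl | hzY
        · exact le_refl _
        · have hz3 := (hbound z hzY).1
          have hcases : z.1 = 0 ∨ z.1 = 1 ∨ z.1 = 2 := by omega
          rcases hcases with h | h | h
          · exact kmin4 z (by omega)
          · exact kmin4 z (by omega)
          · exact absurd h (hno3 z hzY hzm)
      have h8n : (2,1,0) ∉ Y := fun hm8 => hno3 _ hm8 rfl rfl
      have h7n : (2,0,0) ∉ Y := by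
        intro hm7
        have := hm0 h2m _ hm7 rfl
        exact absurd this (by decide)
      exact hblock (2,1,0) (by decide) (by decide) (by decide) h8n
        (fun y hy hy2 => h3b y hy2 (fun he => h7n (he ▸ hy)) (fun he => h8n (he ▸ hy)))
        (mem_chat_one (Finset.mem_insert_self _ _) rfl (hr16pos 1 0)
          (hq16pos 1) (by simp [q16]; exact hpos 2) (fun z _ _ => kmin8 z))
    · -- a₃ at m₁
      have hc8 : c = (2,1,0) := by
        by_contra hcn
        have ha3 : ∀ y ∈ Y, y.1 = 2 → y = c := fun y hy hy2 =>
          huniq y hy c hcY (by rw [hy2, hc2])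
        have h8n : (2,1,0) ∉ Y := fun hmem => hcn (ha3 _ hmem rfl).symm
        have h7n : (2,0,0) ∉ Y := by
          intro hm7
          have h77 := ha3 _ hm7 rfl
          rw [← h77] at hcm
          exact absurd hcm (by decide)
        exact hblock (2,1,0) (by decide) (by decide) (by decide) h8n
          (fun y hy hy2 => h3b y hy2 (fun he => h7n (he ▸ hy)) (fun he => h8n (he ▸ hy)))
          (mem_chat_one (Finset.mem_insert_self _ _) rfl (hr16pos 1 0)
            (hq16pos 1) (by simp [q16]; exact hpos 2) (fun z _ _ => kmin8 z))
      rw [hc8] at hcY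
      have ha3 : ∀ y ∈ Y, y.1 = 2 → y = (2,1,0) := fun y hy hy2 => huniq y hy _ hcY hy2
      have h6 : (1,2,0) ∈ Y := by
        by_contra h6n
        have hpref6 : ∀ y ∈ Y, y.1 = 1 → pref 1 (1,2,0) < pref 1 y := by
          intro y hy hy1
          refine h2c y hy1 ?_ ?_ (fun he => h6n (he ▸ hy))
          · intro he
            have hz := hq1 y hy _ hcY (by rw [he]) rfl
            rw [he] at hz
            exact absurd hz (by decide)
          · intro he
            have hz := hm0 h2m y hy (by rw [he])
            rw [he] at hz
            exact absurd hz (by decide)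
        refine hblock (1,2,0) (by decide) (by decide) (by decide) h6n hpref6 ?_
        refine mem_chat_one (Finset.mem_insert_self _ _) rfl (hr16pos 2 0)
          (hq16pos 2) (by simp [q16]; exact hpos 1) ?_
        intro z hz hzm
        rcases Finset.mem_insert.mp hz with rfl | hzY
        · exact le_refl _
        · have hz3 := (hbound z hzY).1
          have hcases : z.1 = 0 ∨ z.1 = 1 ∨ z.1 = 2 := by omega
          rcases hcases with h | h | h
          · have hz1 := ha1 z hzY h
            rw [hz1] at hzm
            exact absurd hzm (by decide)
          · exact kmin6 z (by omega)
          · have hz1 := ha3 z hzY h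
            rw [hz1] at hzm
            exact absurd hzm (by decide)
      have ha2 : ∀ y ∈ Y, y.1 = 1 → y = (1,2,0) := fun y hy hy1 => huniq y hy _ h6 hy1
      apply Finset.Subset.antisymm
      · intro y hy
        have hz3 := (hbound y hy).1
        have hcases : y.1 = 0 ∨ y.1 = 1 ∨ y.1 = 2 := by omega
        simp only [Finset.mem_insert, Finset.mem_singleton]
        rcases hcases with h | h | h
        · exact Or.inl (ha1 y hy h)
        · exact Or.inr (Or.inl (ha2 y hy h))
        · exact Or.inr (Or.inr (ha3 y hy h))
      · intro y hy
        simp only [Finset.mem_insert, Finset.mem_singleton] at hy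
        rcases hy with rfl | rfl | rfl
        · exact h2m
        · exact h6
        · exact hcY
  exact ⟨⟨halloc1, hcondY1, hblock1⟩, huniqY, ⟨hcondY1, hblock1'⟩, halloc2, hcondY2, hblock2⟩
end

section
/- Single-unit agreement lemma: if all asylum seekers have burden-size equal and two choice rules Ĉ_m and its completion Ĉ'_m are run on a set of contracts X' such that Ĉ'_m(X') contains at most one contract per asylum seeker, then Ĉ'_m(X') = Ĉ_m(X'); in particular, on any input set X' containing at most one contract per asylum seeker, the two rules coincide. -/
/-- A contract at a fixed member state: `(asylum seeker, wait time)`.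
Asylum seekers are labelled by naturals; `π a` is the priority rank of `a`
(smaller rank = higher priority); wait times are naturals. -/
abbrev Ctr := ℕ × ℕ

open Classical in
/-- Pick, from a nonempty set of contracts, the lowest-wait-time contract of the
highest-priority asylum seeker (lexicographic minimum of (rank, wait, agent)). -/
noncomputable def pick (π : ℕ → ℕ) (Z : Finset Ctr) (h : Z.Nonempty) : Ctr :=
  let k := (Z.image fun x => toLex ((π x.1 : ℕ), toLex (x.2, x.1))).min'
    (h.image _)
  ((ofLex (ofLex k).2).2, (ofLex (ofLex k).2).1)

open Classical in
/-- One run of the greedy algorithm with fuel.  `excl = true` excludes all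
contracts of already accepted asylum seekers (the rule `Ĉ_m`), `excl = false`
excludes only already accepted contracts (the completion `Ĉ'_m`). -/
noncomputable def run (s : ℕ → ℕ) (q : ℕ) (r π : ℕ → ℕ) (excl : Bool)
    (X' : Finset Ctr) : ℕ → Finset Ctr → Finset Ctr
  | 0, acc => acc
  | n+1, acc =>
    let Z : Finset Ctr := X'.filter fun x =>
      (acc.filter fun y => y.2 = x.2).card < r x.2 ∧
      (excl = true → ∀ y ∈ acc, y.1 ≠ x.1) ∧
      (excl = false → x ∉ acc)
    if q ≤ acc.sum (fun x => s x.1) then acc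
    else if h : Z.Nonempty then
      run s q r π excl X' n (insert (pick π Z h) acc)
    else acc

/-- The member state choice rule `Ĉ_m`. -/
noncomputable def Chat (s : ℕ → ℕ) (q : ℕ) (r π : ℕ → ℕ)
    (X' : Finset Ctr) : Finset Ctr :=
  run s q r π true X' (X'.card + 1) ∅

/-- The completion `Ĉ'_m` of the member state choice rule. -/
noncomputable def Chat' (s : ℕ → ℕ) (q : ℕ) (r π : ℕ → ℕ)
    (X' : Finset Ctr) : Finset Ctr :=
  run s q r π false X' (X'.card + 1) ∅

open Classical in
lemma pick_spec (π : ℕ → ℕ) (Z : Finset Ctr) (h : Z.Nonempty) :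
    pick π Z h ∈ Z ∧
    (toLex ((π (pick π Z h).1 : ℕ), toLex ((pick π Z h).2, (pick π Z h).1)) =
      (Z.image fun x => toLex ((π x.1 : ℕ), toLex (x.2, x.1))).min' (h.image _)) := by
  obtain ⟨x, hx, hk⟩ := Finset.mem_image.mp
    (Finset.min'_mem (Z.image fun x => toLex ((π x.1 : ℕ), toLex (x.2, x.1))) (h.image _))
  have hpe : pick π Z h = x := by
    unfold pick
    simp only
    rw [← hk]
    simp
  rw [hpe, hk]
  exact ⟨hx, rfl⟩

open Classical in
lemma pick_eq_of_subset (π : ℕ → ℕ) {Z Z' : Finset Ctr} (hZ : Z.Nonempty) (hZ' : Z'.Nonempty)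
    (hsub : Z ⊆ Z') (hmem : pick π Z' hZ' ∈ Z) : pick π Z hZ = pick π Z' hZ' := by
  obtain ⟨hm1, he1⟩ := pick_spec π Z hZ
  obtain ⟨hm2, he2⟩ := pick_spec π Z' hZ'
  have h1 : toLex ((π (pick π Z hZ).1 : ℕ), toLex ((pick π Z hZ).2, (pick π Z hZ).1)) ≤
      toLex ((π (pick π Z' hZ').1 : ℕ), toLex ((pick π Z' hZ').2, (pick π Z' hZ').1)) := by
    rw [he1]; exact Finset.min'_le _ _ (Finset.mem_image_of_mem _ hmem)
  have h2 : toLex ((π (pick π Z' hZ').1 : ℕ), toLex ((pick π Z' hZ').2, (pick π Z' hZ').1)) ≤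
      toLex ((π (pick π Z hZ).1 : ℕ), toLex ((pick π Z hZ).2, (pick π Z hZ).1)) := by
    rw [he2]; exact Finset.min'_le _ _ (Finset.mem_image_of_mem _ (hsub hm1))
  have hkk := le_antisymm h1 h2
  have := congrArg (fun k : Lex (ℕ × Lex (ℕ × ℕ)) =>
    ((ofLex (ofLex k).2).2, (ofLex (ofLex k).2).1)) hkk
  simpa using this

open Classical in
lemma subset_run (s : ℕ → ℕ) (q : ℕ) (r π : ℕ → ℕ) (excl : Bool) (X' : Finset Ctr) :
    ∀ n acc, acc ⊆ run s q r π excl X' n acc := by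
  intro n
  induction n with
  | zero => intro acc; simp [run]
  | succ n ih =>
    intro acc
    rw [run]
    split_ifs with h1 h2
    · exact Finset.Subset.refl _
    · exact (Finset.subset_insert _ _).trans (ih _)
    · exact Finset.Subset.refl _

open Classical in
lemma run_subset (s : ℕ → ℕ) (q : ℕ) (r π : ℕ → ℕ) (excl : Bool) (X' : Finset Ctr) :
    ∀ n acc, run s q r π excl X' n acc ⊆ acc ∪ X' := by
  intro n
  induction n with
  | zero => intro acc; simp [run]
  | succ n ih =>
    intro acc
    rw [run]
    split_ifs with h1 h2
    · exact Finset.subset_union_left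
    · refine (ih _).trans ?_
      intro x hx
      rcases Finset.mem_union.mp hx with hx | hx
      · rcases Finset.mem_insert.mp hx with hx | hx
        · subst hx
          exact Finset.mem_union_right _ (Finset.mem_of_mem_filter _ (pick_spec π _ h2).1)
        · exact Finset.mem_union_left _ hx
      · exact Finset.mem_union_right _ hx
    · exact Finset.subset_union_left

set_option maxHeartbeats 1000000 in
open Classical in
lemma run_false_eq_true (s : ℕ → ℕ) (q : ℕ) (r π : ℕ → ℕ) (X' : Finset Ctr) :
    ∀ n acc,
      (∀ a : ℕ, ((run s q r π false X' n acc).filter fun x => x.1 = a).card ≤ 1) →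
      run s q r π false X' n acc = run s q r π true X' n acc := by
  intro n
  induction n with
  | zero => intro acc _; simp [run]
  | succ n ih =>
    intro acc H
    rw [run] at H
    rw [run, run]
    simp only at H ⊢
    split_ifs at H ⊢ with hq hZf hZt hZt
    · rfl
    · -- Zf nonempty, Zt nonempty
      obtain ⟨hpZ, -⟩ := pick_spec π _ hZf
      obtain ⟨hpX, hcap, -, hnacc⟩ := Finset.mem_filter.mp hpZ
      set p := pick π _ hZf with hp
      have hpnacc : p ∉ acc := hnacc trivial
      have hfresh : ∀ y ∈ acc, y.1 ≠ p.1 := by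
        intro y hy hyp
        have hsub := subset_run s q r π false X' n (insert p acc)
        have hne : y ≠ p := fun h => hpnacc (h ▸ hy)
        have h2 : 1 < ((run s q r π false X' n (insert p acc)).filter
            fun x => x.1 = p.1).card := by
          refine Finset.one_lt_card.mpr ⟨y, ?_, p, ?_, hne⟩
          · exact Finset.mem_filter.mpr ⟨hsub (Finset.mem_insert_of_mem hy), hyp⟩
          · exact Finset.mem_filter.mpr ⟨hsub (Finset.mem_insert_self _ _), rfl⟩
        exact absurd (H p.1) (by omega)
      have hpick : pick π _ hZt = p := by
        refine pick_eq_of_subset π hZt hZf ?_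
          (Finset.mem_filter.mpr ⟨hpX, hcap, fun _ => hfresh, fun h => h.elim⟩)
        intro x hx
        obtain ⟨hxX, hc, he, -⟩ := Finset.mem_filter.mp hx
        exact Finset.mem_filter.mpr ⟨hxX, hc, fun h => h.elim,
          fun _ hxa => he trivial x hxa rfl⟩
      rw [hpick]
      exact ih _ H
    · -- Zf nonempty, Zt empty: contradiction
      exfalso
      obtain ⟨hpZ, -⟩ := pick_spec π _ hZf
      obtain ⟨hpX, hcap, -, hnacc⟩ := Finset.mem_filter.mp hpZ
      set p := pick π _ hZf with hp
      have hpnacc : p ∉ acc := hnacc trivial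
      have hfresh : ∀ y ∈ acc, y.1 ≠ p.1 := by
        intro y hy hyp
        have hsub := subset_run s q r π false X' n (insert p acc)
        have hne : y ≠ p := fun h => hpnacc (h ▸ hy)
        have h2 : 1 < ((run s q r π false X' n (insert p acc)).filter
            fun x => x.1 = p.1).card := by
          refine Finset.one_lt_card.mpr ⟨y, ?_, p, ?_, hne⟩
          · exact Finset.mem_filter.mpr ⟨hsub (Finset.mem_insert_of_mem hy), hyp⟩
          · exact Finset.mem_filter.mpr ⟨hsub (Finset.mem_insert_self _ _), rfl⟩
        exact absurd (H p.1) (by omega)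
      exact hZt ⟨p, Finset.mem_filter.mpr ⟨hpX, hcap, fun _ => hfresh, fun h => h.elim⟩⟩
    · -- Zf empty, Zt nonempty: contradiction
      exfalso
      obtain ⟨x, hx⟩ := hZt
      apply hZf
      obtain ⟨hxX, hc, he, -⟩ := Finset.mem_filter.mp hx
      exact ⟨x, Finset.mem_filter.mpr ⟨hxX, hc, fun h => h.elim,
        fun _ hxa => he trivial x hxa rfl⟩⟩
    · rfl

/-- single-unit agreement: with identical burden-sizes, if
`Ĉ'_m(X')` contains at most one contract per asylum seeker then it equals
`Ĉ_m(X')`; in particular the two rules coincide on any input with at most one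
contract per asylum seeker. -/
theorem chat'_eq_chat_of_single_unit (s : ℕ → ℕ) (q : ℕ) (r π : ℕ → ℕ)
    (hπ : Function.Injective π) (hs : ∀ a a' : ℕ, s a = s a')
    (X' : Finset Ctr) :
    ((∀ a : ℕ, ((Chat' s q r π X').filter fun x => x.1 = a).card ≤ 1) →
      Chat' s q r π X' = Chat s q r π X') ∧
    ((∀ a : ℕ, (X'.filter fun x => x.1 = a).card ≤ 1) →
      Chat' s q r π X' = Chat s q r π X') := by
  have part1 : (∀ a : ℕ, ((Chat' s q r π X').filter fun x => x.1 = a).card ≤ 1) →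
      Chat' s q r π X' = Chat s q r π X' := by
    intro h
    exact run_false_eq_true s q r π X' (X'.card + 1) ∅ h
  refine ⟨part1, fun h => part1 fun a => ?_⟩
  have hsub : Chat' s q r π X' ⊆ X' := by
    have := run_subset s q r π false X' (X'.card + 1) ∅
    simpa [Chat'] using this
  calc ((Chat' s q r π X').filter fun x => x.1 = a).card
      ≤ (X'.filter fun x => x.1 = a).card :=
        Finset.card_le_card (Finset.filter_subset_filter _ hsub)
    _ ≤ 1 := h a
end
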